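/- Let s, t, v, w ∈ V with v ∈ P_s(w), v ∉ {s,t} and t ≠ w, and let σ_{st}(v,w) denote the number of shortest s-t paths in G that use the edge (v,w). Then σ_{sw} · σ_{st}(v,w) = σ_{sv} · σ_{st}(w); equivalently, σ_{st}(v,w) = (σ_{sv}/σ_{sw}) · σ_{st}(w). -/

import Mathlib

open scoped BigOperators

/-- A directed graph on vertex set `V` with positive real edge weights. -/
structure WDigraph (V : Type*) where
  /-- the edge relation -/
  E : V → V → Prop
  /-- the edge weights -/
  w : V → V → ℝ
  /-- weights of edges are positive -/
  pos : ∀ a b, E a b → 0 < w a b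

namespace WDigraph

variable {V : Type*} [Fintype V] [DecidableEq V]

/-- `p` is a simple path from `s` to `t` in `G`: a nonempty list of pairwise
distinct vertices starting at `s`, ending at `t`, consecutive vertices joined
by edges. (Since all weights are positive, every shortest path is simple, so
it suffices to consider simple paths throughout.) -/
def IsPath (G : WDigraph V) (s t : V) (p : List V) : Prop :=
  List.Chain' G.E p ∧ p.head? = some s ∧ p.getLast? = some t ∧ p.Nodup

/-- The total weight of a list of vertices (sum of the weights of consecutive pairs). -/
def pw (G : WDigraph V) : List V → ℝ
  | [] => 0
  | [_] => 0
  | a :: b :: r => G.w a b + G.pw (b :: r)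

/-- `d(s,t)`: shortest-path distance from `s` to `t`, equal to `⊤` (infinity)
if `t` is unreachable from `s`. -/
noncomputable def dist (G : WDigraph V) (s t : V) : EReal :=
  sInf ((fun p => (G.pw p : EReal)) '' {p | G.IsPath s t p})

/-- The set of shortest `s`-`t` paths in `G`. -/
def SP (G : WDigraph V) (s t : V) : Set (List V) :=
  {p | G.IsPath s t p ∧ (G.pw p : EReal) = G.dist s t}

/-- `σ_{st}`: the number of shortest `s`-`t` paths in `G`. -/
noncomputable def sigma (G : WDigraph V) (s t : V) : ℕ :=
  (G.SP s t).ncard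

/-- `σ_{st}(v)`: the number of shortest `s`-`t` paths in `G` that contain `v`. -/
noncomputable def sigmaV (G : WDigraph V) (s t v : V) : ℕ :=
  {p ∈ G.SP s t | v ∈ p}.ncard

/-- `σ_{st}(v,w)`: the number of shortest `s`-`t` paths in `G` using the edge `(v,w)`. -/
noncomputable def sigmaE (G : WDigraph V) (s t v w : V) : ℕ :=
  {p ∈ G.SP s t | [v, w] <:+: p}.ncard

/-- `P_s(t)`: the set of predecessors of `t` with respect to source `s`:
nodes `y` with `(y,t) ∈ E` and `d(s,y) + ω(y,t) = d(s,t) < ∞`. -/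
def pred (G : WDigraph V) (s t : V) : Set V :=
  {y | G.E y t ∧ G.dist s y + (G.w y t : EReal) = G.dist s t ∧ G.dist s t < ⊤}

/-- `δ_{s•}(v)`: Brandes's one-sided dependency of `s` on `v`
(a summand is `0` whenever its denominator is `0`, which is automatic since
in Lean division by zero yields zero). -/
noncomputable def delta (G : WDigraph V) (s v : V) : ℝ :=
  ∑ᶠ t ∈ {t : V | t ≠ s ∧ t ≠ v}, (G.sigmaV s t v : ℝ) / (G.sigma s t : ℝ)

/-- `c_B(v)`: the betweenness centrality of `v`. -/
noncomputable def bc (G : WDigraph V) (v : V) : ℝ :=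
  ∑ᶠ s ∈ {s : V | s ≠ v}, G.delta s v

/-- `G'` is obtained from `G` by the incremental update `(u, v, ω'(u,v))`:
either a new edge `(u,v) ∉ E` is inserted with positive weight, or the weight
of the existing edge `(u,v)` is decreased; all other edges and weights are
unchanged. (Positivity of all weights is part of the `WDigraph` structure.) -/
structure IsUpdate (G G' : WDigraph V) (u v : V) : Prop where
  /-- the updated edge is present in `G'` -/
  edge' : G'.E u v
  /-- `E' = E ∪ {(u,v)}` -/
  edge_iff : ∀ a b, G'.E a b ↔ G.E a b ∨ a = u ∧ b = v
  /-- `ω'` agrees with `ω` on all edges other than `(u,v)` -/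
  weight_eq : ∀ a b, ¬(a = u ∧ b = v) → G'.w a b = G.w a b
  /-- either an insertion of a new edge, or a weight decrease of an existing one -/
  insert_or_decrease : ¬ G.E u v ∨ (G.E u v ∧ G'.w u v < G.w u v)

/-- `S(t)`: the affected sources of `t`. -/
def affS (G G' : WDigraph V) (t : V) : Set V :=
  {s | G.dist s t > G'.dist s t ∨ G.sigma s t ≠ G'.sigma s t}

/-- `T(s)`: the affected targets of `s`. -/
def affT (G G' : WDigraph V) (s : V) : Set V :=
  {t | G.dist s t > G'.dist s t ∨ G.sigma s t ≠ G'.sigma s t}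

/-- `Δ_{s•}(v) = Σ_{t ∈ T(s), t ≠ v} σ_{st}(v)/σ_{st}`, computed in `G`
(`0`-convention for zero denominators). -/
noncomputable def Delta (G G' : WDigraph V) (s v : V) : ℝ :=
  ∑ᶠ t ∈ {t : V | t ∈ affT G G' s ∧ t ≠ v}, (G.sigmaV s t v : ℝ) / (G.sigma s t : ℝ)

/-- `Δ'_{s•}(v) = Σ_{t ∈ T(s), t ≠ v} σ'_{st}(v)/σ'_{st}`, computed in `G'`
(`0`-convention for zero denominators). -/
noncomputable def Delta' (G G' : WDigraph V) (s v : V) : ℝ :=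
  ∑ᶠ t ∈ {t : V | t ∈ affT G G' s ∧ t ≠ v}, (G'.sigmaV s t v : ℝ) / (G'.sigma s t : ℝ)

variable {G : WDigraph V}

def IsWalk (G : WDigraph V) (s t : V) (p : List V) : Prop :=
  List.Chain' G.E p ∧ p.head? = some s ∧ p.getLast? = some t

lemma pw_append (l c : List V) (z : V) :
    G.pw (l ++ z :: c) = G.pw (l ++ [z]) + G.pw (z :: c) := by
  induction l with
  | nil => simp [pw]
  | cons a l ih =>
    cases l with
    | nil => simp [pw]
    | cons b l' =>
      rw [show (a :: b :: l') ++ z :: c = a :: b :: (l' ++ z :: c) from rfl,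
        show (a :: b :: l') ++ [z] = a :: b :: (l' ++ [z]) from rfl,
        show G.pw (a :: b :: (l' ++ z :: c)) = G.w a b + G.pw (b :: (l' ++ z :: c)) from rfl,
        show G.pw (a :: b :: (l' ++ [z])) = G.w a b + G.pw (b :: (l' ++ [z])) from rfl]
      have ih' : G.pw (b :: (l' ++ z :: c)) = G.pw (b :: (l' ++ [z])) + G.pw (z :: c) := ih
      rw [ih']
      ring

lemma pw_nonneg : ∀ {p : List V}, List.Chain' G.E p → 0 ≤ G.pw p
  | [], _ => le_refl _
  | [_], _ => le_refl _
  | a :: b :: r, h => by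
    unfold List.Chain' at h
    rw [List.isChain_cons_cons] at h
    have := G.pos a b h.1
    have := pw_nonneg (p := b :: r) h.2
    simp only [pw]; linarith

lemma pw_pos {p : List V} (h : List.Chain' G.E p) (h2 : 2 ≤ p.length) : 0 < G.pw p := by
  match p, h2 with
  | a :: b :: r, _ =>
    unfold List.Chain' at h
    rw [List.isChain_cons_cons] at h
    have := G.pos a b h.1
    have := pw_nonneg (p := b :: r) h.2
    simp only [pw]; linarith

lemma dist_le {s t : V} {p : List V} (h : G.IsPath s t p) : G.dist s t ≤ (G.pw p : EReal) :=
  sInf_le ⟨p, h, rfl⟩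

lemma path_finite (s t : V) : {p | G.IsPath s t p}.Finite := by
  apply (List.finite_length_le V (Fintype.card V)).subset
  intro p hp
  exact hp.2.2.2.length_le_card

lemma SP_finite (s t : V) : (G.SP s t).Finite :=
  (path_finite s t).subset fun p hp => hp.1

lemma dup_split {l : List V} (h : ¬ l.Nodup) :
    ∃ (a : List V) (z : V) (b c : List V), l = a ++ z :: (b ++ z :: c) := by
  induction l with
  | nil => simp at h
  | cons x xs ih =>
    by_cases hx : x ∈ xs
    · obtain ⟨b, c, rfl⟩ := List.append_of_mem hx
      exact ⟨[], x, b, c, rfl⟩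
    · have hxs : ¬ xs.Nodup := by simp [List.nodup_cons, hx] at h; exact h
      obtain ⟨a, z, b, c, rfl⟩ := ih hxs
      exact ⟨x :: a, z, b, c, rfl⟩

lemma chain_splice {l l' c : List V} {z : V} (h1 : List.Chain' G.E (l ++ [z]))
    (h2 : List.Chain' G.E (l' ++ z :: c)) : List.Chain' G.E (l ++ z :: c) := by
  unfold List.Chain' at h1 h2 ⊢
  rw [List.isChain_append] at h1 h2 ⊢
  refine ⟨h1.1, h2.2.1, ?_⟩
  intro a ha y hy
  exact h1.2.2 a ha y (by simpa using hy)

lemma head?_append_cons' (l : List V) (z : V) (c : List V) :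
    (l ++ z :: c).head? = (l ++ [z]).head? := by
  cases l <;> simp

lemma getLast?_append_cons (l : List V) (z : V) (c : List V) :
    (l ++ z :: c).getLast? = (z :: c).getLast? := by
  rw [List.getLast?_append]
  have h : (z :: c).getLast?.isSome := List.getLast?_isSome.2 (by simp)
  obtain ⟨a, ha⟩ := Option.isSome_iff_exists.1 h
  rw [ha]; rfl

lemma walk_to_path {s t : V} : ∀ (n : ℕ) (p : List V), p.length ≤ n → G.IsWalk s t p →
    ∃ p', G.IsPath s t p' ∧ G.pw p' ≤ G.pw p ∧ (¬ p.Nodup → G.pw p' < G.pw p) := by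
  intro n
  induction n with
  | zero =>
    intro p hl hw
    interval_cases h : p.length
    · rw [List.length_eq_zero_iff] at h; subst h; simp [IsWalk] at hw
  | succ n ih =>
    intro p hl hw
    by_cases hnd : p.Nodup
    · exact ⟨p, ⟨hw.1, hw.2.1, hw.2.2, hnd⟩, le_refl _, fun h => absurd hnd h⟩
    · obtain ⟨a, z, b, c, rfl⟩ := dup_split hnd
      obtain ⟨hch, hhd, hlast⟩ := hw
      have hsp := List.isChain_append.1 hch
      have hzsplit : List.Chain' G.E ((z :: b) ++ z :: c) := hsp.2.1
      have hzsp := List.isChain_append.1 hzsplit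
      have hchzc : List.Chain' G.E (z :: c) := hzsp.2.1
      have hchzbz : List.Chain' G.E ((z :: b) ++ [z]) :=
        List.isChain_append.2 ⟨hzsp.1, List.isChain_singleton z,
          fun x hx y hy => hzsp.2.2 x hx y (by simpa using hy)⟩
      have hch2 : List.Chain' G.E (a ++ z :: c) :=
        List.isChain_append.2 ⟨hsp.1, hchzc, fun x hx y hy => hsp.2.2 x hx y (by simpa using hy)⟩
      have hw2 : G.IsWalk s t (a ++ z :: c) := by
        refine ⟨hch2, ?_, ?_⟩
        · rw [head?_append_cons' a z c, ← head?_append_cons' a z (b ++ z :: c)]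
          exact hhd
        · rw [getLast?_append_cons a z (b ++ z :: c),
            show z :: (b ++ z :: c) = (z :: b) ++ z :: c from rfl,
            getLast?_append_cons (z :: b) z c] at hlast
          rw [getLast?_append_cons a z c]
          exact hlast
      have hlen : (a ++ z :: c).length ≤ n := by
        simp only [List.length_append, List.length_cons] at hl ⊢
        omega
      obtain ⟨p', hp', hle, _⟩ := ih (a ++ z :: c) hlen hw2
      have hlt : G.pw (a ++ z :: c) < G.pw (a ++ z :: (b ++ z :: c)) := by
        rw [pw_append a c z, pw_append a (b ++ z :: c) z]
        have h1 : G.pw (z :: (b ++ z :: c)) = G.pw ((z :: b) ++ [z]) + G.pw (z :: c) := by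
          rw [show z :: (b ++ z :: c) = (z :: b) ++ z :: c from rfl, pw_append]
        have h2 : 0 < G.pw ((z :: b) ++ [z]) := pw_pos hchzbz (by simp)
        rw [h1]; linarith
      exact ⟨p', hp', le_of_lt (lt_of_le_of_lt hle hlt), fun _ => lt_of_le_of_lt hle hlt⟩

lemma dist_le_walk {s t : V} {p : List V} (h : G.IsWalk s t p) :
    G.dist s t ≤ (G.pw p : EReal) := by
  obtain ⟨p', hp', hle, _⟩ := walk_to_path p.length p (le_refl _) h
  exact le_trans (dist_le hp') (by exact_mod_cast hle)

lemma walk_mem_SP {s t : V} {p : List V} (h : G.IsWalk s t p)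
    (he : (G.pw p : EReal) = G.dist s t) : p ∈ G.SP s t := by
  by_cases hnd : p.Nodup
  · exact ⟨⟨h.1, h.2.1, h.2.2, hnd⟩, he⟩
  · exfalso
    obtain ⟨p', hp', _, hlt⟩ := walk_to_path p.length p (le_refl _) h
    have h1 := dist_le hp'
    have h2 : (G.pw p' : EReal) < (G.pw p : EReal) := by exact_mod_cast hlt hnd
    rw [he] at h2
    exact absurd (lt_of_le_of_lt h1 h2) (lt_irrefl _)

lemma exists_SP {s t : V} (h : G.dist s t < ⊤) : ∃ p, p ∈ G.SP s t := by
  have hne : {p | G.IsPath s t p}.Nonempty := by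
    by_contra hc
    rw [Set.not_nonempty_iff_eq_empty] at hc
    rw [dist, hc] at h
    simp at h
  have himg : ((fun p => (G.pw p : EReal)) '' {p | G.IsPath s t p}).Nonempty := hne.image _
  have hfin : ((fun p => (G.pw p : EReal)) '' {p | G.IsPath s t p}).Finite :=
    (path_finite s t).image _
  have := himg.csInf_mem hfin
  obtain ⟨p, hp, hpw⟩ := this
  exact ⟨p, hp, hpw⟩

lemma SP_ne_nil {s t : V} {p : List V} (h : p ∈ G.SP s t) : p ≠ [] := by
  intro hc; subst hc; simp [SP, IsPath] at h

lemma SP_concat {s z : V} {p : List V} (h : p ∈ G.SP s z) : ∃ l, p = l ++ [z] := by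
  have hne := SP_ne_nil h
  refine ⟨p.dropLast, ?_⟩
  have := List.dropLast_append_getLast hne
  have hz : p.getLast hne = z := by
    have := h.1.2.2.1
    rw [List.getLast?_eq_getLast hne] at this
    exact Option.some_injective _ this
  rw [← hz]; exact this.symm

lemma prefix_SP {s t z : V} {p l c : List V} (hp : p ∈ G.SP s t) (hsplit : p = l ++ z :: c) :
    (l ++ [z]) ∈ G.SP s z := by
  obtain ⟨⟨hch, hhd, hlast, hnd⟩, hpw⟩ := hp
  subst hsplit
  have hpre : (l ++ [z]) <+: (l ++ z :: c) := ⟨c, by simp⟩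
  have hpath : G.IsPath s z (l ++ [z]) := by
    refine ⟨hch.prefix hpre, ?_, (List.getLast?_concat (l := l)), hnd.sublist hpre.sublist⟩
    rw [← head?_append_cons' l z c]; exact hhd
  have h1 : G.dist s z ≤ (G.pw (l ++ [z]) : EReal) := dist_le hpath
  rcases eq_or_lt_of_le h1 with heq | hlt
  · exact ⟨hpath, heq.symm⟩
  · exfalso
    obtain ⟨r₀, hr₀⟩ := exists_SP (lt_of_lt_of_le hlt le_top)
    obtain ⟨l₀, rfl⟩ := SP_concat hr₀
    have hwalk : G.IsWalk s t (l₀ ++ z :: c) := by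
      refine ⟨chain_splice (l' := l) hr₀.1.1 hch, ?_, ?_⟩
      · have := hr₀.1.2.1
        rw [head?_append_cons' l₀ z c, ← head?_append_cons' l₀ z []]
        simpa using this
      · rw [getLast?_append_cons l₀ z c]
        rw [getLast?_append_cons l z c] at hlast
        exact hlast
    have hcmp : G.pw (l₀ ++ z :: c) < G.pw (l ++ z :: c) := by
      rw [pw_append l₀ c z, pw_append l c z]
      have : G.pw (l₀ ++ [z]) < G.pw (l ++ [z]) := by
        have := hr₀.2
        rw [← this] at hlt
        exact_mod_cast hlt
      linarith
    have := dist_le_walk hwalk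
    rw [← hpw] at this
    exact absurd (lt_of_le_of_lt this (by exact_mod_cast hcmp)) (lt_irrefl _)

lemma comp_SP {s w t : V} {r r₁ c : List V} (hr : r ∈ G.SP s w) (hr₁ : r₁ ∈ G.SP s w)
    (h : r₁ ++ c ∈ G.SP s t) : r ++ c ∈ G.SP s t := by
  obtain ⟨l, rfl⟩ := SP_concat hr
  obtain ⟨l₁, rfl⟩ := SP_concat hr₁
  cases c with
  | nil =>
    simp only [List.append_nil] at h ⊢
    have hwt : w = t := by
      have h1 := hr₁.1.2.2.1
      have h2 := h.1.2.2.1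
      rw [h1] at h2; exact Option.some_injective _ h2
    subst hwt
    exact hr
  | cons c0 cs =>
    have hc1 : (l₁ ++ [w]) ++ c0 :: cs = l₁ ++ w :: (c0 :: cs) := by simp
    have hc : (l ++ [w]) ++ c0 :: cs = l ++ w :: (c0 :: cs) := by simp
    rw [hc1] at h
    rw [hc]
    apply walk_mem_SP
    · refine ⟨chain_splice hr.1.1 h.1.1, ?_, ?_⟩
      · have := hr.1.2.1
        rw [head?_append_cons' l w (c0 :: cs), ← head?_append_cons' l w []]
        simpa using this
      · have hh := h.1.2.2.1
        rw [getLast?_append_cons l₁ w (c0 :: cs)] at hh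
        rw [getLast?_append_cons l w (c0 :: cs)]
        exact hh
    · rw [pw_append l (c0 :: cs) w]
      have e1 : G.pw (l ++ [w]) = G.pw (l₁ ++ [w]) := by
        have := hr.2.trans hr₁.2.symm
        exact_mod_cast this
      rw [e1, ← pw_append l₁ (c0 :: cs) w]
      exact h.2

lemma unique_split {r r' c c' : List V} {w : V} (h : r ++ c = r' ++ c')
    (hn : (r ++ c).Nodup) (hw : r.getLast? = some w) (hw' : r'.getLast? = some w) :
    r = r' ∧ c = c' := by
  rcases List.append_eq_append_iff.1 h with ⟨d, hd1, hd2⟩ | ⟨d, hd1, hd2⟩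
  · -- r' = r ++ d, c = d ++ c'
    cases d with
    | nil => simp at hd1 hd2; exact ⟨hd1.symm, hd2⟩
    | cons d0 ds =>
      exfalso
      subst hd1 hd2
      have hnr' : (r ++ d0 :: ds).Nodup := by
        rw [h] at hn
        exact hn.sublist (List.sublist_append_left _ _)
      have hwr : w ∈ r := List.mem_of_mem_getLast? hw
      have hwd : w ∈ d0 :: ds := by
        rw [List.getLast?_append] at hw'
        cases hds : (d0 :: ds).getLast? with
        | none => simp at hds
        | some a =>
          rw [hds] at hw'
          simp at hw'
          subst hw'
          exact List.mem_of_mem_getLast? hds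
      exact (List.nodup_append.1 hnr').2.2 w hwr w hwd rfl
  · -- r = r' ++ d, c' = d ++ c
    cases d with
    | nil => simp at hd1 hd2; exact ⟨hd1, hd2.symm⟩
    | cons d0 ds =>
      exfalso
      subst hd1 hd2
      have hnr : (r' ++ d0 :: ds).Nodup := hn.sublist (List.sublist_append_left _ _)
      have hwr : w ∈ r' := List.mem_of_mem_getLast? hw'
      have hwd : w ∈ d0 :: ds := by
        rw [List.getLast?_append] at hw
        cases hds : (d0 :: ds).getLast? with
        | none => simp at hds
        | some a =>
          rw [hds] at hw
          simp at hw
          subst hw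
          exact List.mem_of_mem_getLast? hds
      exact (List.nodup_append.1 hnr).2.2 w hwr w hwd rfl

lemma ncard_prod {α β : Type*} (s : Set α) (t : Set β) :
    (s ×ˢ t).ncard = s.ncard * t.ncard := by
  rw [← Nat.card_coe_set_eq, ← Nat.card_coe_set_eq, ← Nat.card_coe_set_eq,
    ← Nat.card_prod]
  exact Nat.card_congr (Equiv.Set.prod s t)


/-- Let `s, t, x, w ∈ V` with `x ∈ P_s(w)`, `x ∉ {s,t}` and `t ≠ w`,
and let `σ_{st}(x,w)` be the number of shortest `s`-`t` paths using the edge `(x,w)`.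
Then `σ_{sw} · σ_{st}(x,w) = σ_{sx} · σ_{st}(w)`; equivalently,
`σ_{st}(x,w) = (σ_{sx}/σ_{sw}) · σ_{st}(w)`. -/
theorem sigmaE_eq_ratio (G : WDigraph V) (s t x w : V)
    (hx : x ∈ G.pred s w) (hxs : x ≠ s) (hxt : x ≠ t) (htw : t ≠ w) :
    G.sigma s w * G.sigmaE s t x w = G.sigma s x * G.sigmaV s t w ∧
      (G.sigmaE s t x w : ℝ) =
        (G.sigma s x : ℝ) / (G.sigma s w : ℝ) * (G.sigmaV s t w : ℝ) := by
  obtain ⟨hE, hd, hlt⟩ := hx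
  classical
  set Q : Set (List V) := {c | ∃ r ∈ G.SP s w, r ++ c ∈ G.SP s t} with hQdef
  have hstep : ∀ r ∈ G.SP s x, r ++ [w] ∈ G.SP s w := by
    intro r hr
    obtain ⟨l, rfl⟩ := SP_concat hr
    apply walk_mem_SP
    · refine ⟨?_, ?_, ?_⟩
      · rw [show (l ++ [x]) ++ [w] = l ++ x :: [w] from by simp]
        refine List.isChain_append.2 ⟨(List.isChain_append.1 hr.1.1).1, ?_, ?_⟩
        · exact List.isChain_pair.2 hE
        · intro a ha y hy
          exact (List.isChain_append.1 hr.1.1).2.2 a ha y (by simpa using hy)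
      · rw [show (l ++ [x]) ++ [w] = l ++ x :: [w] from by simp,
          head?_append_cons' l x [w]]
        exact hr.1.2.1
      · exact List.getLast?_concat
    · rw [show (l ++ [x]) ++ [w] = l ++ x :: [w] from by simp, pw_append l [w] x]
      have hxw : G.pw [x, w] = G.w x w := by simp [pw]
      rw [hxw, EReal.coe_add, hr.2]
      exact hd
  have hBeq : {p ∈ G.SP s t | w ∈ p} =
      (fun rc : List V × List V => rc.1 ++ rc.2) '' (G.SP s w ×ˢ Q) := by
    ext p
    constructor
    · rintro ⟨hp, hwp⟩
      obtain ⟨l₁, l₂, rfl⟩ := List.append_of_mem hwp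
      have hr : (l₁ ++ [w]) ∈ G.SP s w := prefix_SP hp rfl
      refine ⟨(l₁ ++ [w], l₂), ⟨hr, ⟨l₁ ++ [w], hr,
        (show (l₁ ++ [w]) ++ l₂ = l₁ ++ w :: l₂ from by simp) ▸ hp⟩⟩, by simp⟩
    · rintro ⟨⟨r, c⟩, hm, rfl⟩
      obtain ⟨r₁, hr₁, hrc⟩ := hm.2
      refine ⟨comp_SP hm.1 hr₁ hrc, ?_⟩
      exact List.mem_append.2 (Or.inl (List.mem_of_mem_getLast? hm.1.1.2.2.1))
  have hBinj : Set.InjOn (fun rc : List V × List V => rc.1 ++ rc.2) (G.SP s w ×ˢ Q) := by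
    rintro ⟨r, c⟩ hm ⟨r', c'⟩ hm' heq
    simp only at heq
    obtain ⟨r₁, hr₁, hrc⟩ := hm.2
    have hmem : r ++ c ∈ G.SP s t := comp_SP hm.1 hr₁ hrc
    have hus := unique_split heq hmem.1.2.2.2 hm.1.1.2.2.1 hm'.1.1.2.2.1
    simp [Prod.ext_iff, hus.1, hus.2]
  have hAeq : {p ∈ G.SP s t | [x, w] <:+: p} =
      (fun rc : List V × List V => rc.1 ++ w :: rc.2) '' (G.SP s x ×ˢ Q) := by
    ext p
    constructor
    · rintro ⟨hp, hinf⟩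
      obtain ⟨l₁, l₂, hpe⟩ := hinf
      have hsplit1 : p = l₁ ++ x :: (w :: l₂) := by rw [← hpe]; simp
      have hr : (l₁ ++ [x]) ∈ G.SP s x := prefix_SP hp hsplit1
      have hsplit2 : p = (l₁ ++ [x]) ++ w :: l₂ := by rw [← hpe]; simp
      have hrw : ((l₁ ++ [x]) ++ [w]) ∈ G.SP s w := prefix_SP hp hsplit2
      refine ⟨(l₁ ++ [x], l₂), ⟨hr, ⟨(l₁ ++ [x]) ++ [w], hrw, ?_⟩⟩, ?_⟩
      · rw [show ((l₁ ++ [x]) ++ [w]) ++ l₂ = (l₁ ++ [x]) ++ w :: l₂ from by simp]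
        exact hsplit2 ▸ hp
      · exact hsplit2.symm
    · rintro ⟨⟨r, c⟩, hm, rfl⟩
      obtain ⟨r₁, hr₁, hrc⟩ := hm.2
      have hrw := hstep r hm.1
      have hmem : (r ++ [w]) ++ c ∈ G.SP s t := comp_SP hrw hr₁ hrc
      rw [show (r ++ [w]) ++ c = r ++ w :: c from by simp] at hmem
      refine ⟨hmem, ?_⟩
      obtain ⟨l, rfl⟩ := SP_concat hm.1
      exact ⟨l, c, by simp⟩
  have hAinj : Set.InjOn (fun rc : List V × List V => rc.1 ++ w :: rc.2)
      (G.SP s x ×ˢ Q) := by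
    rintro ⟨r, c⟩ hm ⟨r', c'⟩ hm' heq
    simp only at heq
    have heq' : (r ++ [w]) ++ c = (r' ++ [w]) ++ c' := by simpa using heq
    obtain ⟨r₁, hr₁, hrc⟩ := hm.2
    have hmem := comp_SP (hstep r hm.1) hr₁ hrc
    have hus := unique_split heq' hmem.1.2.2.2 (List.getLast?_concat (l := r)) (List.getLast?_concat (l := r'))
    have hr : r = r' := by
      have := hus.1
      simpa using congrArg List.dropLast this
    simp [Prod.ext_iff, hr, hus.2]
  have hB : G.sigmaV s t w = G.sigma s w * Q.ncard := by
    rw [sigmaV, hBeq, Set.ncard_image_of_injOn hBinj, ncard_prod, sigma]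
  have hA : G.sigmaE s t x w = G.sigma s x * Q.ncard := by
    rw [sigmaE, hAeq, Set.ncard_image_of_injOn hAinj, ncard_prod, sigma]
  have hNat : G.sigma s w * G.sigmaE s t x w = G.sigma s x * G.sigmaV s t w := by
    rw [hA, hB]; ring
  refine ⟨hNat, ?_⟩
  have hσw : (G.sigma s w : ℝ) ≠ 0 := by
    obtain ⟨p, hp⟩ := exists_SP hlt
    have hne : (G.SP s w).Nonempty := ⟨p, hp⟩
    have h0 : G.sigma s w ≠ 0 := by
      have := (Set.ncard_pos (SP_finite s w)).2 hne
      rw [sigma]; omega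
    exact_mod_cast h0
  have hcast : (G.sigma s w : ℝ) * (G.sigmaE s t x w : ℝ)
      = (G.sigma s x : ℝ) * (G.sigmaV s t w : ℝ) := by exact_mod_cast hNat
  field_simp
  linarith [hcast]

end WDigraph
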